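/- Let n ≥ 2 and r ≥ 1 be integers, m = r·n, and let S' ∈ [n]^m be the concatenation of r copies of the sequence (1, 2, …, n). Then the working-set bound satisfies WS(S') ≥ (m − n)·log₂ n, while there exists a binary search tree T on [n] with one-finger cost F^1_T(S') ≤ 3m. -/

import Mathlib

/-- Binary trees with node labels of type `α`. -/
inductive BTree (α : Type) : Type where
  | leaf : BTree α
  | node : BTree α → α → BTree α → BTree α

namespace BTree

variable {α : Type} [LinearOrder α]

/-- The set of keys (node labels) of a binary tree. -/
def keys : BTree α → Finset α
  | .leaf => ∅
  | .node l x r => insert x (keys l ∪ keys r)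

/-- The binary-search-tree property: every node's label is greater than all labels
in its left subtree and smaller than all labels in its right subtree. -/
def IsBST : BTree α → Prop
  | .leaf => True
  | .node l x r => (∀ y ∈ keys l, y < x) ∧ (∀ y ∈ keys r, x < y) ∧ IsBST l ∧ IsBST r

/-- Depth (edge-distance from the root) of the node labeled `a` in a BST. -/
def depth : BTree α → α → ℕ
  | .leaf, _ => 0
  | .node l x r, a => if a = x then 0 else if a < x then depth l a + 1 else depth r a + 1

/-- Edge-distance between the nodes labeled `a` and `b` in a BST. -/
def dist : BTree α → α → α → ℕ
  | .leaf, _, _ => 0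
  | .node l x r, a, b =>
      if a = b then 0
      else if a < x ∧ b < x then dist l a b
      else if x < a ∧ x < b then dist r a b
      else depth (node l x r) a + depth (node l x r) b

/-- The key at the root, if any. -/
def root? : BTree α → Option α
  | .leaf => none
  | .node _ x _ => some x

end BTree

/-- `fingerPos X f init i t` is the position of finger `i` just before (0-indexed) time `t`:
the initial position `init i` if finger `i` has served no access so far, and otherwise
the last key it served. Here `f s` is the finger serving the access `X s`. -/
def fingerPos {α : Type} {k : ℕ} (X : ℕ → α) (f : ℕ → Fin k) (init : Fin k → α)
    (i : Fin k) : ℕ → α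
  | 0 => init i
  | t + 1 => if f t = i then X t else fingerPos X f init i t

/-- The cost of the `k`-finger strategy `(f, init)` serving the accesses
`X 0, …, X (m-1)` in the tree `T`: at each time we pay `1` plus the distance
travelled by the serving finger. -/
def fingerCost {α : Type} [LinearOrder α] (T : BTree α) (k m : ℕ) (X : ℕ → α)
    (f : ℕ → Fin k) (init : Fin k → α) : ℕ :=
  ∑ t ∈ Finset.range m, (1 + T.dist (fingerPos X f init (f t) t) (X t))

/-- `F^k_T(X)`: the optimal cost of serving `X 0, …, X (m-1)` in `T` with `k` fingers. -/
noncomputable def fingerOpt {α : Type} [LinearOrder α] (T : BTree α) (k m : ℕ)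
    (X : ℕ → α) : ℕ :=
  sInf {c : ℕ | ∃ (f : ℕ → Fin k) (init : Fin k → α), fingerCost T k m X f init = c}

/-- `lastOcc x t a`: the largest index `s < t` (with `s ≥ 1`) such that `x s = a`,
and `0` if there is no such index. -/
def lastOcc (x : ℕ → ℕ) (t a : ℕ) : ℕ :=
  WithBot.unbotD 0 (((Finset.Ico 1 t).filter (fun s => x s = a)).max)

/-- `ρ_t(a)`: the number of distinct keys among `x (s+1), …, x t`, where `s` is the last
occurrence of `a` strictly before time `t` (and `s = 0` if `a` does not occur before `t`). -/
def rho (x : ℕ → ℕ) (t a : ℕ) : ℕ :=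
  ((Finset.Icc (lastOcc x t a + 1) t).image x).card

/-- The working-set bound `WS(x) = Σ_{t=1}^m log₂(max(2, ρ_t(x t)))` of the 1-indexed
access sequence `x 1, …, x m`. -/
noncomputable def wsBound (m : ℕ) (x : ℕ → ℕ) : ℝ :=
  ∑ t ∈ Finset.Icc 1 m, Real.logb 2 ((max 2 (rho x t (x t)) : ℕ) : ℝ)

/-! ### Auxiliary lemmas -/

lemma mod_inj_aux {n a b : ℕ} (h1 : a ≤ b) (h2 : b - a < n) (h3 : a % n = b % n) : a = b := by
  have hd : n ∣ b - a := (Nat.modEq_iff_dvd' h1).mp h3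
  have := Nat.eq_zero_of_dvd_of_lt hd h2
  omega

lemma lastOcc_cyclic {n t : ℕ} (hn : 1 ≤ n) (ht : n + 1 ≤ t) :
    lastOcc (fun s => (s - 1) % n + 1) t ((t - 1) % n + 1) = t - n := by
  unfold lastOcc
  set S := (Finset.Ico 1 t).filter (fun s => (s - 1) % n + 1 = (t - 1) % n + 1) with hS
  have hmem : t - n ∈ S := by
    simp only [hS, Finset.mem_filter, Finset.mem_Ico]
    refine ⟨⟨by omega, by omega⟩, ?_⟩
    have he : t - n - 1 + n = t - 1 := by omega
    have h2 : (t - 1) % n = (t - n - 1) % n := by rw [← he, Nat.add_mod_right]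
    omega
  have hub : ∀ s ∈ S, s ≤ t - n := by
    intro s hs
    simp only [hS, Finset.mem_filter, Finset.mem_Ico] at hs
    by_contra h
    push_neg at h
    have h4 : (s - 1) % n = (t - 1) % n := by omega
    have := mod_inj_aux (n := n) (a := s - 1) (b := t - 1) (by omega) (by omega) h4
    omega
  have hmax : S.max = ((t - n : ℕ) : WithBot ℕ) :=
    le_antisymm (Finset.max_le fun s hs => WithBot.coe_le_coe.mpr (hub s hs))
      (Finset.le_max hmem)
  rw [hmax]
  rfl

lemma rho_cyclic {n t : ℕ} (hn : 1 ≤ n) (ht : n + 1 ≤ t) :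
    rho (fun s => (s - 1) % n + 1) t ((t - 1) % n + 1) = n := by
  unfold rho
  rw [lastOcc_cyclic hn ht]
  have hinj : Set.InjOn (fun s => (s - 1) % n + 1) (Finset.Icc (t - n + 1) t) := by
    intro a ha b hb hab
    simp only [Finset.coe_Icc, Set.mem_Icc] at ha hb
    simp only at hab
    rcases le_total a b with h | h
    · have := mod_inj_aux (n := n) (a := a - 1) (b := b - 1) (by omega) (by omega) (by omega)
      omega
    · have := mod_inj_aux (n := n) (a := b - 1) (b := a - 1) (by omega) (by omega) (by omega)
      omega
  rw [Finset.card_image_of_injOn hinj, Nat.card_Icc]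
  omega

lemma ws_part (n r : ℕ) (hn : 2 ≤ n) (hr : 1 ≤ r) :
    ((r * n - n : ℕ) : ℝ) * Real.logb 2 (n : ℝ) ≤
      wsBound (r * n) (fun t => (t - 1) % n + 1) := by
  have hle : n ≤ r * n := Nat.le_mul_of_pos_left n hr
  unfold wsBound
  have hsplit : Finset.Icc 1 (r * n) = Finset.Ioc 0 (r * n) := by
    rw [← Finset.Icc_add_one_left_eq_Ioc, zero_add]
  rw [hsplit, ← Finset.sum_Ioc_consecutive _ (Nat.zero_le n) hle]
  have hterm : ∀ t ∈ Finset.Ioc n (r * n),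
      Real.logb 2 ((max 2 (rho (fun s => (s - 1) % n + 1) t ((t - 1) % n + 1)) : ℕ) : ℝ)
        = Real.logb 2 (n : ℝ) := by
    intro t ht
    rw [Finset.mem_Ioc] at ht
    rw [rho_cyclic (by omega) (by omega), max_eq_right hn]
  have h2 : ∑ t ∈ Finset.Ioc n (r * n),
      Real.logb 2 ((max 2 (rho (fun s => (s - 1) % n + 1) t ((t - 1) % n + 1)) : ℕ) : ℝ)
        = ((r * n - n : ℕ) : ℝ) * Real.logb 2 (n : ℝ) := by
    rw [Finset.sum_congr rfl hterm, Finset.sum_const, Nat.card_Ioc, nsmul_eq_mul]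
  have hA : 0 ≤ ∑ t ∈ Finset.Ioc 0 n,
      Real.logb 2 ((max 2 (rho (fun s => (s - 1) % n + 1) t ((t - 1) % n + 1)) : ℕ) : ℝ) := by
    refine Finset.sum_nonneg fun t _ => Real.logb_nonneg (by norm_num) ?_
    have h2' : (2 : ℕ) ≤ max 2 (rho (fun s => (s - 1) % n + 1) t ((t - 1) % n + 1)) :=
      le_max_left _ _
    have h2'' : (2 : ℝ) ≤ _ := Nat.cast_le (α := ℝ) |>.mpr h2' |>.trans_eq' (by norm_num)
    linarith
  linarith [h2, hA]

/-- Right spine with keys `a, a+1, …, a+k-1`. -/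
def spine (a : ℕ) : ℕ → BTree ℕ
  | 0 => .leaf
  | k + 1 => .node .leaf a (spine (a + 1) k)

lemma spine_keys (a k : ℕ) : (spine a k).keys = Finset.Ico a (a + k) := by
  induction k generalizing a with
  | zero => simp [spine, BTree.keys]
  | succ k ih =>
      simp only [spine, BTree.keys, ih]
      ext b
      simp only [Finset.mem_insert, Finset.mem_union, Finset.mem_Ico, Finset.notMem_empty,
        false_or]
      omega

lemma spine_bst (a k : ℕ) : (spine a k).IsBST := by
  induction k generalizing a with
  | zero => trivial
  | succ k ih =>
      refine ⟨?_, ?_, trivial, ih (a + 1)⟩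
      · intro y hy
        simp [BTree.keys] at hy
      · intro y hy
        rw [spine_keys] at hy
        rw [Finset.mem_Ico] at hy
        omega

lemma spine_depth {a k b : ℕ} (h1 : a ≤ b) (h2 : b < a + k) : (spine a k).depth b = b - a := by
  induction k generalizing a with
  | zero => omega
  | succ k ih =>
      simp only [spine, BTree.depth]
      rcases eq_or_lt_of_le h1 with h | h
      · simp [← h]
      · rw [if_neg (by omega), if_neg (by omega), ih (by omega) (by omega)]
        omega

lemma spine_dist {a k b c : ℕ} (h1 : a ≤ b) (h2 : b ≤ c) (h3 : c < a + k) :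
    (spine a k).dist b c = c - b := by
  induction k generalizing a with
  | zero => omega
  | succ k ih =>
      have e : spine a (k + 1) = .node .leaf a (spine (a + 1) k) := rfl
      rw [e]
      simp only [BTree.dist]
      rcases eq_or_lt_of_le h2 with rfl | hbc
      · simp
      · rw [if_neg (by omega)]
        rcases eq_or_lt_of_le h1 with rfl | hab
        · rw [if_neg (by omega), if_neg (by omega), ← e,
            spine_depth (le_refl a) (by omega), spine_depth (le_of_lt hbc) h3]
          omega
        · rw [if_neg (by omega), if_pos ⟨hab, by omega⟩, ih (by omega) (by omega)]

lemma spine_dist_rev {a k c : ℕ} (h1 : a ≤ c) (h3 : c < a + k) :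
    (spine a k).dist c a = c - a := by
  rcases eq_or_lt_of_le h1 with rfl | h1
  · cases k with
    | zero => omega
    | succ k => simp [spine, BTree.dist]
  · cases k with
    | zero => omega
    | succ k =>
        have e : spine a (k + 1) = .node .leaf a (spine (a + 1) k) := rfl
        rw [e]
        simp only [BTree.dist]
        rw [if_neg (by omega), if_neg (by omega), if_neg (by omega), ← e,
          spine_depth (le_of_lt h1) h3, spine_depth (le_refl a) (by omega)]
        omega

lemma fingerPos_one {α : Type} (X : ℕ → α) (f : ℕ → Fin 1) (init : Fin 1 → α) (i : Fin 1)
    (t : ℕ) : fingerPos X f init i t = if t = 0 then init i else X (t - 1) := by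
  cases t with
  | zero => rfl
  | succ t =>
      have : f t = i := Subsingleton.elim _ _
      simp [fingerPos, this]

lemma step_bound (n : ℕ) (hn : 2 ≤ n) (t : ℕ) :
    1 + (spine 1 n).dist (if t = 0 then 1 else (t - 1) % n + 1) (t % n + 1)
      ≤ (if t % n = 0 then n else 2) := by
  rcases Nat.eq_zero_or_pos t with rfl | ht
  · rw [if_pos rfl, Nat.zero_mod, if_pos rfl,
      spine_dist (le_refl 1) (le_refl 1) (by omega)]
    omega
  · rw [if_neg (by omega)]
    set q := (t - 1) % n with hq
    have hqn : q < n := Nat.mod_lt _ (by omega)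
    have h0 : (q + 1) % n = t % n := by
      rw [hq, Nat.mod_add_mod]
      congr 1
      omega
    by_cases hc : t % n = 0
    · have hq1 : q = n - 1 := by
        by_contra hne
        have hlt : q + 1 < n := by omega
        rw [Nat.mod_eq_of_lt hlt] at h0
        omega
      rw [if_pos hc, hc, hq1]
      have : n - 1 + 1 = n := by omega
      rw [this, spine_dist_rev (by omega) (by omega)]
      omega
    · have hlt : q + 1 < n := by
        by_contra hge
        have : q + 1 = n := by omega
        rw [this, Nat.mod_self] at h0
        omega
      have htn : t % n = q + 1 := by rw [← h0, Nat.mod_eq_of_lt hlt]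
      rw [if_neg hc, htn, spine_dist (by omega) (by omega) (by omega)]
      omega

lemma sum_h_bound (n : ℕ) (hn : 2 ≤ n) (r : ℕ) :
    (∑ t ∈ Finset.range (r * n), (if t % n = 0 then n else 2)) ≤ 3 * (r * n) := by
  induction r with
  | zero => simp
  | succ r ih =>
      have hsplit : (r + 1) * n = r * n + n := by ring
      rw [hsplit, Finset.sum_range_add]
      have hcongr : ∀ i ∈ Finset.range n,
          (if (r * n + i) % n = 0 then n else 2) = (if i = 0 then n else 2) := by
        intro i hi
        rw [Finset.mem_range] at hi
        rw [add_comm (r * n) i, Nat.add_mul_mod_self_right, Nat.mod_eq_of_lt hi]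
      have hblock : (∑ i ∈ Finset.range n, (if (r * n + i) % n = 0 then n else 2)) ≤ 3 * n := by
        rw [Finset.sum_congr rfl hcongr]
        have heq : ∀ i ∈ Finset.range n,
            (if i = 0 then n else 2) = 2 + (if i = 0 then n - 2 else 0) := by
          intro i _
          split <;> omega
        rw [Finset.sum_congr rfl heq, Finset.sum_add_distrib, Finset.sum_const,
          Finset.sum_ite_eq' (Finset.range n) 0 (fun _ => n - 2),
          if_pos (Finset.mem_range.mpr (by omega))]
        simp only [smul_eq_mul, Finset.card_range]
        omega
      calc (∑ t ∈ Finset.range (r * n), (if t % n = 0 then n else 2))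
            + (∑ i ∈ Finset.range n, (if (r * n + i) % n = 0 then n else 2))
          ≤ 3 * (r * n) + 3 * n := Nat.add_le_add ih hblock
        _ = 3 * (r * n + n) := by ring

lemma finger_part (n r : ℕ) (hn : 2 ≤ n) :
    fingerOpt (spine 1 n) 1 (r * n) (fun t => t % n + 1) ≤ 3 * (r * n) := by
  have hcost : fingerCost (spine 1 n) 1 (r * n) (fun t => t % n + 1)
      (fun _ => 0) (fun _ => 1) ≤ 3 * (r * n) := by
    unfold fingerCost
    calc (∑ t ∈ Finset.range (r * n), (1 + (spine 1 n).dist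
            (fingerPos (fun t => t % n + 1) (fun _ => 0) (fun _ => 1) ((fun _ => (0 : Fin 1)) t) t)
            (t % n + 1)))
        ≤ ∑ t ∈ Finset.range (r * n), (if t % n = 0 then n else 2) := by
          refine Finset.sum_le_sum fun t _ => ?_
          rw [fingerPos_one]
          exact step_bound n hn t
      _ ≤ 3 * (r * n) := sum_h_bound n hn r
  exact le_trans (Nat.sInf_le ⟨fun _ => 0, fun _ => 1, rfl⟩) hcost

/-- For `n ≥ 2`, `r ≥ 1`, `m = r·n`, and `S'` the concatenation of `r`
copies of `(1, 2, …, n)` (so the `t`-th access, `1 ≤ t ≤ m`, is `(t−1) mod n + 1`), the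
working-set bound satisfies `WS(S') ≥ (m − n)·log₂ n`, while some BST `T` on `[n]` has
one-finger cost `F^1_T(S') ≤ 3m`. -/
theorem stmt14 (n r : ℕ) (hn : 2 ≤ n) (hr : 1 ≤ r) :
    ((r * n - n : ℕ) : ℝ) * Real.logb 2 (n : ℝ) ≤
        wsBound (r * n) (fun t => (t - 1) % n + 1) ∧
      ∃ T : BTree ℕ, T.IsBST ∧ T.keys = Finset.Icc 1 n ∧
        fingerOpt T 1 (r * n) (fun t => t % n + 1) ≤ 3 * (r * n) := by
  refine ⟨ws_part n r hn hr, spine 1 n, spine_bst 1 n, ?_, finger_part n r hn⟩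
  rw [spine_keys]
  ext b
  simp only [Finset.mem_Ico, Finset.mem_Icc]
  omega
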